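/- Let T > 0 and let f : [0,∞) → ℝ be a continuous bounded function that is S-asymptotically T-periodic. Let (t_n) be a sequence of real numbers with t_n → +∞, and suppose that the translates f_{t_n}(t) = f(t + t_n) converge uniformly on every compact subset of [0,∞) to a function F : [0,∞) → ℝ. Then F is continuous and T-periodic, i.e. F(t+T) = F(t) for all t ≥ 0. -/

import Mathlib

open Filter Set

/-- If `f` is continuous, bounded and S-asymptotically `T`-periodic on `[0,∞)`,
and the translates `t ↦ f (t + tₙ)` (with `tₙ → ∞`) converge uniformly on compact
subsets of `[0,∞)` to `F`, then `F` is continuous and `T`-periodic on `[0,∞)`. -/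
theorem limit_of_translates_is_periodic (T : ℝ) (hT : 0 < T) (f F : ℝ → ℝ)
    (hf : ContinuousOn f (Ici 0)) (hbdd : ∃ M : ℝ, ∀ t ∈ Ici (0 : ℝ), |f t| ≤ M)
    (hsap : Tendsto (fun t : ℝ => f (t + T) - f t) atTop (nhds 0))
    (tseq : ℕ → ℝ) (htseq : Tendsto tseq atTop atTop)
    (hconv : ∀ K : Set ℝ, K ⊆ Ici 0 → IsCompact K →
      TendstoUniformlyOn (fun (n : ℕ) (t : ℝ) => f (t + tseq n)) F atTop K) :
    ContinuousOn F (Ici 0) ∧ ∀ t ∈ Ici (0 : ℝ), F (t + T) = F t := by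
  have hpt : ∀ t ∈ Ici (0:ℝ), Tendsto (fun n => f (t + tseq n)) atTop (nhds (F t)) := by
    intro t ht
    exact (hconv {t} (by simpa using ht) isCompact_singleton).tendsto_at rfl
  constructor
  · intro t ht
    have hK : ContinuousOn F (Icc 0 (t+1)) := by
      refine (hconv (Icc 0 (t+1)) Icc_subset_Ici_self isCompact_Icc).continuousOn ?_
      apply Filter.Eventually.frequently
      filter_upwards [htseq.eventually_ge_atTop 0] with n hn
      refine hf.comp (continuous_add_right (tseq n)).continuousOn ?_
      intro s hs
      have : (0:ℝ) ≤ s + tseq n := add_nonneg hs.1 hn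
      exact this
    have hmem : Icc 0 (t+1) ∈ nhdsWithin t (Ici 0) := by
      have : Ici 0 ∩ Iio (t+1) ⊆ Icc 0 (t+1) := fun s hs => ⟨hs.1, le_of_lt hs.2⟩
      exact mem_of_superset (inter_mem_nhdsWithin _ (Iio_mem_nhds (by linarith [ht.out]))) this
    exact ((hK t ⟨ht, by linarith⟩).mono_of_mem_nhdsWithin hmem)
  · intro t ht
    have h1 := hpt t ht
    have h2 := hpt (t + T) (by have := ht.out; exact le_trans this (by linarith))
    have h3 : Tendsto (fun n => f (t + tseq n + T) - f (t + tseq n)) atTop (nhds 0) :=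
      hsap.comp (tendsto_atTop_add_const_left _ t htseq)
    have h2' : Tendsto (fun n => f (t + tseq n + T)) atTop (nhds (F (t + T))) := by
      have : (fun n => f (t + tseq n + T)) = fun n => f (t + T + tseq n) := by
        funext n; ring_nf
      rw [this]; exact h2
    have := tendsto_nhds_unique (h2'.sub h1) h3
    linarith [sub_eq_zero.mp this]
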